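/- Let P be the group with presentation on six generators c₀, g₀, e₀, c₁, g₁, e₁ and the eleven relators e₀g₁e₁g₀, g₀⁻¹c₀⁻¹g₀c₀, e₁⁻¹c₁e₀⁻¹c₀, g₁e₁²g₀, c₀⁻¹e₀²c₁⁻¹, e₁g₀e₀g₁, g₁⁻¹c₁⁻¹g₁c₁, e₀⁻¹c₀e₁⁻¹c₁, g₀e₀²g₁, c₁⁻¹e₁²c₀⁻¹, and c₁. Then P is isomorphic to ℤ × ℤ, with the images of e₀ and g₀ forming a basis of this free abelian group; in particular, in P one has c₀ = e₀², e₁ = e₀, and g₁ = e₀⁻²g₀⁻¹. -/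

import Mathlib

/-- Relators of the presentation on six generators `c₀ = of 0`, `g₀ = of 1`, `e₀ = of 2`,
`c₁ = of 3`, `g₁ = of 4`, `e₁ = of 5` with the eleven relators
`e₀g₁e₁g₀`, `g₀⁻¹c₀⁻¹g₀c₀`, `e₁⁻¹c₁e₀⁻¹c₀`, `g₁e₁²g₀`, `c₀⁻¹e₀²c₁⁻¹`,
`e₁g₀e₀g₁`, `g₁⁻¹c₁⁻¹g₁c₁`, `e₀⁻¹c₀e₁⁻¹c₁`, `g₀e₀²g₁`, `c₁⁻¹e₁²c₀⁻¹`, `c₁`. -/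
def stmt11Rels : Set (FreeGroup (Fin 6)) :=
  {FreeGroup.of 2 * FreeGroup.of 4 * FreeGroup.of 5 * FreeGroup.of 1,
   (FreeGroup.of 1)⁻¹ * (FreeGroup.of 0)⁻¹ * FreeGroup.of 1 * FreeGroup.of 0,
   (FreeGroup.of 5)⁻¹ * FreeGroup.of 3 * (FreeGroup.of 2)⁻¹ * FreeGroup.of 0,
   FreeGroup.of 4 * (FreeGroup.of 5 * FreeGroup.of 5) * FreeGroup.of 1,
   (FreeGroup.of 0)⁻¹ * (FreeGroup.of 2 * FreeGroup.of 2) * (FreeGroup.of 3)⁻¹,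
   FreeGroup.of 5 * FreeGroup.of 1 * FreeGroup.of 2 * FreeGroup.of 4,
   (FreeGroup.of 4)⁻¹ * (FreeGroup.of 3)⁻¹ * FreeGroup.of 4 * FreeGroup.of 3,
   (FreeGroup.of 2)⁻¹ * FreeGroup.of 0 * (FreeGroup.of 5)⁻¹ * FreeGroup.of 3,
   FreeGroup.of 1 * (FreeGroup.of 2 * FreeGroup.of 2) * FreeGroup.of 4,
   (FreeGroup.of 3)⁻¹ * (FreeGroup.of 5 * FreeGroup.of 5) * (FreeGroup.of 0)⁻¹,
   FreeGroup.of 3}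

namespace Stmt11Aux

lemma relOne {r : FreeGroup (Fin 6)} (h : r ∈ stmt11Rels) :
    PresentedGroup.mk stmt11Rels r = 1 :=
  (QuotientGroup.eq_one_iff _).2 (Subgroup.subset_normalClosure h)

local notation "P" => PresentedGroup stmt11Rels
local notation "x" i => (PresentedGroup.of i : P)

lemma mk_of (i : Fin 6) : PresentedGroup.mk stmt11Rels (FreeGroup.of i) = (x i) := rfl

-- r11 : c₁ = 1
lemma h3 : (x 3) = 1 := relOne (by simp [stmt11Rels])

-- r5 : c₀ = e₀² c₁⁻¹ = e₀²
lemma h0 : (x 0) = (x 2) * (x 2) := by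
  have := relOne (show (FreeGroup.of 0)⁻¹ * (FreeGroup.of 2 * FreeGroup.of 2) * (FreeGroup.of 3)⁻¹
      ∈ stmt11Rels by simp [stmt11Rels])
  simp only [map_mul, map_inv, mk_of, h3, inv_one, mul_one] at this
  exact inv_mul_eq_one.mp (by rw [← this])

-- r8 : e₀⁻¹ c₀ e₁⁻¹ c₁ = 1  ⇒  e₁ = e₀
lemma h5 : (x 5) = (x 2) := by
  have := relOne (show (FreeGroup.of 2)⁻¹ * FreeGroup.of 0 * (FreeGroup.of 5)⁻¹ * FreeGroup.of 3
      ∈ stmt11Rels by simp [stmt11Rels])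
  simp only [map_mul, map_inv, mk_of, h3, h0] at this
  -- this : (x2)⁻¹ * (x2*x2) * (x5)⁻¹ * 1 = 1
  have h' : (x 2) * (x 5)⁻¹ = 1 := by
    rw [← this]; group
  calc (x 5) = ((x 2) * (x 5)⁻¹)⁻¹ * (x 2) := by group
  _ = (x 2) := by rw [h']; group

-- r4 : g₁ e₁² g₀ = 1 ⇒ g₁ = g₀⁻¹ e₀⁻²
lemma h4' : (x 4) = ((x 1))⁻¹ * ((x 2))⁻¹ * ((x 2))⁻¹ := by
  have := relOne (show FreeGroup.of 4 * (FreeGroup.of 5 * FreeGroup.of 5) * FreeGroup.of 1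
      ∈ stmt11Rels by simp [stmt11Rels])
  simp only [map_mul, mk_of, h5] at this
  calc (x 4) = ((x 4) * ((x 2) * (x 2)) * (x 1)) * ((x 1))⁻¹ * ((x 2))⁻¹ * ((x 2))⁻¹ := by group
  _ = _ := by rw [this]; group

-- r9 : g₀ e₀² g₁ = 1 ⇒ g₁ = e₀⁻² g₀⁻¹
lemma h4 : (x 4) = ((x 2))⁻¹ * ((x 2))⁻¹ * ((x 1))⁻¹ := by
  have := relOne (show FreeGroup.of 1 * (FreeGroup.of 2 * FreeGroup.of 2) * FreeGroup.of 4
      ∈ stmt11Rels by simp [stmt11Rels])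
  simp only [map_mul, mk_of] at this
  calc (x 4) = ((x 2))⁻¹ * ((x 2))⁻¹ * ((x 1))⁻¹ * ((x 1) * ((x 2) * (x 2)) * (x 4)) := by group
  _ = _ := by rw [this]; group

lemma hcomm : Commute (x 2) (x 1) := by
  have := relOne (show FreeGroup.of 2 * FreeGroup.of 4 * FreeGroup.of 5 * FreeGroup.of 1
      ∈ stmt11Rels by simp [stmt11Rels])
  simp only [map_mul, mk_of, h5, h4'] at this
  -- this : x2 * (x1⁻¹ * x2⁻¹ * x2⁻¹) * x2 * x1 = 1
  have h' : (x 2) * ((x 1))⁻¹ * ((x 2))⁻¹ * (x 1) = 1 := by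
    rw [← this]; group
  have h'' : (x 2) * ((x 1))⁻¹ = ((x 1))⁻¹ * (x 2) := by
    calc (x 2) * ((x 1))⁻¹
        = ((x 2) * ((x 1))⁻¹ * ((x 2))⁻¹ * (x 1)) * (((x 1))⁻¹ * (x 2)) := by group
      _ = ((x 1))⁻¹ * (x 2) := by rw [h', one_mul]
  have : Commute (x 2) ((x 1))⁻¹ := h''
  simpa using this.inv_right

def fgen : Fin 6 → Multiplicative (ℤ × ℤ) :=
  ![Multiplicative.ofAdd (2, 0), Multiplicative.ofAdd (0, 1), Multiplicative.ofAdd (1, 0),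
    Multiplicative.ofAdd (0, 0), Multiplicative.ofAdd (-2, -1), Multiplicative.ofAdd (1, 0)]

lemma fgen_rel : ∀ r ∈ stmt11Rels, FreeGroup.lift fgen r = 1 := by
  intro r hr
  simp only [stmt11Rels, Set.mem_insert_iff, Set.mem_singleton_iff] at hr
  rcases hr with rfl|rfl|rfl|rfl|rfl|rfl|rfl|rfl|rfl|rfl|rfl <;>
    simp [fgen, ← ofAdd_add, ← ofAdd_neg, Prod.ext_iff] <;> decide

noncomputable def φ : P →* Multiplicative (ℤ × ℤ) := PresentedGroup.toGroup fgen_rel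

def ψ : Multiplicative (ℤ × ℤ) →* P :=
  MonoidHom.mk' (fun p => (x 2) ^ (p.toAdd.1) * (x 1) ^ (p.toAdd.2)) (by
    intro a b
    show (x 2) ^ (a.toAdd.1 + b.toAdd.1) * (x 1) ^ (a.toAdd.2 + b.toAdd.2) = _
    rw [zpow_add, zpow_add]
    have := (hcomm.zpow_zpow (b.toAdd.1) (a.toAdd.2)).symm
    calc (x 2) ^ a.toAdd.1 * (x 2) ^ b.toAdd.1 * ((x 1) ^ a.toAdd.2 * (x 1) ^ b.toAdd.2)
        = (x 2) ^ a.toAdd.1 * ((x 2) ^ b.toAdd.1 * (x 1) ^ a.toAdd.2) * (x 1) ^ b.toAdd.2 := by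
          group
      _ = (x 2) ^ a.toAdd.1 * ((x 1) ^ a.toAdd.2 * (x 2) ^ b.toAdd.1) * (x 1) ^ b.toAdd.2 := by
          rw [this]
      _ = _ := by group)

lemma hψφ : ψ.comp φ = MonoidHom.id P := by
  apply PresentedGroup.ext
  have key : ∀ a b : ℤ, ψ (Multiplicative.ofAdd (a, b)) = (x 2) ^ a * (x 1) ^ b :=
    fun a b => rfl
  intro i
  fin_cases i <;>
    simp only [MonoidHom.comp_apply, MonoidHom.id_apply, φ, PresentedGroup.toGroup.of] <;>
    [ (show ψ (Multiplicative.ofAdd ((2:ℤ), (0:ℤ))) = (x 0); rw [key, zpow_two, h0]; group);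
      (show ψ (Multiplicative.ofAdd ((0:ℤ), (1:ℤ))) = (x 1); rw [key]; group);
      (show ψ (Multiplicative.ofAdd ((1:ℤ), (0:ℤ))) = (x 2); rw [key]; group);
      (show ψ (Multiplicative.ofAdd ((0:ℤ), (0:ℤ))) = (x 3); rw [key, h3]; group);
      (show ψ (Multiplicative.ofAdd ((-2:ℤ), (-1:ℤ))) = (x 4); rw [key, h4]; group);
      (show ψ (Multiplicative.ofAdd ((1:ℤ), (0:ℤ))) = (x 5); rw [key, h5]; group) ]

lemma hφψ : φ.comp ψ = MonoidHom.id (Multiplicative (ℤ × ℤ)) := by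
  refine MonoidHom.ext fun p => ?_
  show φ ((x 2) ^ (p.toAdd.1) * (x 1) ^ (p.toAdd.2)) = p
  rw [map_mul, map_zpow, map_zpow]
  show (Multiplicative.ofAdd ((1:ℤ), (0:ℤ))) ^ p.toAdd.1 *
      (Multiplicative.ofAdd ((0:ℤ), (1:ℤ))) ^ p.toAdd.2 = p
  rw [← ofAdd_zsmul, ← ofAdd_zsmul, ← ofAdd_add]
  simp [Prod.ext_iff]

noncomputable def equiv : P ≃* Multiplicative (ℤ × ℤ) := φ.toMulEquiv ψ hψφ hφψ

lemma equiv_of2 : equiv (x 2) = Multiplicative.ofAdd ((1:ℤ), (0:ℤ)) := by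
  show φ (x 2) = _
  rw [φ, PresentedGroup.toGroup.of]; rfl

lemma equiv_of1 : equiv (x 1) = Multiplicative.ofAdd ((0:ℤ), (1:ℤ)) := by
  show φ (x 1) = _
  rw [φ, PresentedGroup.toGroup.of]; rfl

end Stmt11Aux

open Stmt11Aux in
/-- The group `P` presented by the above relators is isomorphic to `ℤ × ℤ`, with the images
of `e₀` and `g₀` forming a basis; in particular, in `P` one has `c₀ = e₀²`, `e₁ = e₀` and
`g₁ = e₀⁻²g₀⁻¹`. -/
theorem stmt11 :
    (∃ e : PresentedGroup stmt11Rels ≃* Multiplicative (ℤ × ℤ),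
      e (PresentedGroup.of 2) = Multiplicative.ofAdd (1, 0) ∧
      e (PresentedGroup.of 1) = Multiplicative.ofAdd (0, 1)) ∧
    (PresentedGroup.of (rels := stmt11Rels) 0 =
      PresentedGroup.of 2 * PresentedGroup.of 2) ∧
    (PresentedGroup.of (rels := stmt11Rels) 5 = PresentedGroup.of 2) ∧
    (PresentedGroup.of (rels := stmt11Rels) 4 =
      (PresentedGroup.of 2)⁻¹ * (PresentedGroup.of 2)⁻¹ * (PresentedGroup.of 1)⁻¹) :=
  ⟨⟨equiv, equiv_of2, equiv_of1⟩, h0, h5, h4⟩
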